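/- Let E be a Polish space with a σ-finite Borel measure μ, let (T_t)_{t≥0} be a strongly continuous semigroup of bounded linear operators on L^1(E,μ) with generator L (where D(L) = { u ∈ L^1 : lim_{t→0^+} (T_t u − u)/t exists in L^1-norm } and L u is that limit). Then the generator of the adjoint semigroup (T_t^*)_{t≥0} on (L^∞(E,μ), C(L^∞,L^1)) is the adjoint operator L^*; precisely, for F ∈ L^∞(E,μ) the following are equivalent: (i) there exists G ∈ L^∞(E,μ) such that ∫_E F (L u) dμ = ∫_E G u dμ for all u ∈ D(L); (ii) the limit lim_{t→0^+} (T_t^* F − F)/t exists in the topology C(L^∞,L^1); and in that case the limit in (ii) equals the function G in (i). -/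

import Mathlib

open MeasureTheory Filter Topology Set

/-- The seminorm `p_K(F) = sup_{g ∈ K} |∫ F g dμ|` generating the topology
`C(L^∞, L^1)` of uniform convergence on (norm-compact) subsets `K` of `L^1`. -/
noncomputable def pK {α : Type*} [MeasurableSpace α] (μ : Measure α)
    (K : Set (Lp ℝ 1 μ)) (F : Lp ℝ ⊤ μ) : ℝ :=
  ⨆ g ∈ K, |∫ x, F x * g x ∂μ|

section Aux

open ENNReal NNReal


variable {E : Type*} [MeasurableSpace E] {μ : Measure E}

lemma ae_le_norm_top (F : Lp ℝ ⊤ μ) : ∀ᵐ x ∂μ, ‖F x‖ ≤ ‖F‖ := by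
  have hne : eLpNormEssSup (F : E → ℝ) μ ≠ ⊤ := by
    rw [← eLpNorm_exponent_top]; exact (Lp.memLp F).eLpNorm_ne_top
  filter_upwards [ae_le_eLpNormEssSup (f := (F : E → ℝ)) (μ := μ)] with x hx
  rw [Lp.norm_def, eLpNorm_exponent_top]
  have h2 : ((‖F x‖₊ : ℝ≥0∞)).toReal ≤ (eLpNormEssSup (F : E → ℝ) μ).toReal :=
    ENNReal.toReal_mono hne hx
  simpa using h2

lemma integrable_pair (F : Lp ℝ ⊤ μ) (u : Lp ℝ 1 μ) :
    Integrable (fun x => F x * u x) μ :=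
  (L1.integrable_coeFn u).bdd_mul (Lp.aestronglyMeasurable F) (ae_le_norm_top F)

lemma abs_pair_le (F : Lp ℝ ⊤ μ) (u : Lp ℝ 1 μ) :
    |∫ x, F x * u x ∂μ| ≤ ‖F‖ * ‖u‖ := by
  have h1 : |∫ x, F x * u x ∂μ| ≤ ∫ x, ‖F x * u x‖ ∂μ := by
    rw [← Real.norm_eq_abs]; exact norm_integral_le_integral_norm _
  refine h1.trans ?_
  have h2 : ∫ x, ‖F x * u x‖ ∂μ ≤ ∫ x, ‖F‖ * ‖u x‖ ∂μ := by
    refine integral_mono_ae (integrable_pair F u).norm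
      (((L1.integrable_coeFn u).norm).const_mul _) ?_
    filter_upwards [ae_le_norm_top F] with x hx
    calc ‖F x * u x‖ = ‖F x‖ * ‖u x‖ := by simp [abs_mul]
      _ ≤ ‖F‖ * ‖u x‖ := mul_le_mul_of_nonneg_right hx (norm_nonneg _)
  rw [integral_const_mul] at h2
  rw [L1.norm_eq_integral_norm u]
  exact h2

lemma pair_sub_left (A B : Lp ℝ ⊤ μ) (u : Lp ℝ 1 μ) :
    ∫ x, (A - B) x * u x ∂μ = ∫ x, A x * u x ∂μ - ∫ x, B x * u x ∂μ := by
  rw [← integral_sub (integrable_pair A u) (integrable_pair B u)]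
  refine integral_congr_ae ?_
  filter_upwards [Lp.coeFn_sub A B] with x hx
  rw [hx, Pi.sub_apply]; ring

lemma pair_smul_left (c : ℝ) (A : Lp ℝ ⊤ μ) (u : Lp ℝ 1 μ) :
    ∫ x, (c • A) x * u x ∂μ = c * ∫ x, A x * u x ∂μ := by
  rw [← integral_const_mul]
  refine integral_congr_ae ?_
  filter_upwards [Lp.coeFn_smul c A] with x hx
  simp [hx, mul_assoc]

lemma pair_sub_right (F : Lp ℝ ⊤ μ) (a b : Lp ℝ 1 μ) :
    ∫ x, F x * (a - b) x ∂μ = ∫ x, F x * a x ∂μ - ∫ x, F x * b x ∂μ := by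
  rw [← integral_sub (integrable_pair F a) (integrable_pair F b)]
  refine integral_congr_ae ?_
  filter_upwards [Lp.coeFn_sub a b] with x hx
  rw [hx, Pi.sub_apply]; ring

lemma pair_smul_right (c : ℝ) (F : Lp ℝ ⊤ μ) (a : Lp ℝ 1 μ) :
    ∫ x, F x * (c • a) x ∂μ = c * ∫ x, F x * a x ∂μ := by
  rw [← integral_const_mul]
  refine integral_congr_ae ?_
  filter_upwards [Lp.coeFn_smul c a] with x hx
  simp [hx]; ring

variable {E : Type*} [MeasurableSpace E] {μ : Measure E}

lemma pK_le {K : Set (Lp ℝ 1 μ)} {X : Lp ℝ ⊤ μ} {C : ℝ} (hC : 0 ≤ C)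
    (h : ∀ g ∈ K, |∫ x, X x * g x ∂μ| ≤ C) : pK μ K X ≤ C :=
  Real.iSup_le (fun g => Real.iSup_le (fun hg => h g hg) hC) hC

lemma pK_nonneg (K : Set (Lp ℝ 1 μ)) (X : Lp ℝ ⊤ μ) : 0 ≤ pK μ K X :=
  Real.iSup_nonneg fun g => Real.iSup_nonneg fun _ => abs_nonneg _

lemma pK_singleton (u : Lp ℝ 1 μ) (X : Lp ℝ ⊤ μ) :
    pK μ {u} X = |∫ x, X x * u x ∂μ| := by
  refine le_antisymm (pK_le (abs_nonneg _) ?_) ?_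
  · rintro g hg
    rw [Set.mem_singleton_iff] at hg
    subst hg; exact le_rfl
  · have hb : ∀ g : Lp ℝ 1 μ,
        (⨆ _ : g ∈ ({u} : Set (Lp ℝ 1 μ)), |∫ x, X x * g x ∂μ|) ≤ |∫ x, X x * u x ∂μ| := by
      intro g
      refine Real.iSup_le (fun hg => ?_) (abs_nonneg _)
      rw [Set.mem_singleton_iff] at hg; subst hg; exact le_rfl
    have hba : BddAbove (Set.range fun g : Lp ℝ 1 μ =>
        ⨆ _ : g ∈ ({u} : Set (Lp ℝ 1 μ)), |∫ x, X x * g x ∂μ|) :=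
      ⟨|∫ x, X x * u x ∂μ|, by rintro - ⟨g, rfl⟩; exact hb g⟩
    calc |∫ x, X x * u x ∂μ|
        = ⨆ _ : u ∈ ({u} : Set (Lp ℝ 1 μ)), |∫ x, X x * u x ∂μ| :=
          (ciSup_pos (p := u ∈ ({u} : Set (Lp ℝ 1 μ))) (f := fun _ => |∫ x, X x * u x ∂μ|) (Set.mem_singleton u)).symm
      _ ≤ pK μ {u} X := le_ciSup hba u

lemma equicontinuity
    (T : ℝ → (Lp ℝ 1 μ →L[ℝ] Lp ℝ 1 μ))
    (hT0 : ∀ u, T 0 u = u)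
    (hTcont : ∀ u, ContinuousOn (fun t => T t u) (Set.Ici 0))
    {K : Set (Lp ℝ 1 μ)} (hK : IsCompact K) {ε : ℝ} (hε : 0 < ε) :
    ∃ δ > 0, ∀ s, 0 ≤ s → s < δ → ∀ u ∈ K, ‖T s u - u‖ ≤ ε := by
  obtain ⟨M, hM⟩ : ∃ M, ∀ i : Set.Icc (0:ℝ) 1, ‖T i‖ ≤ M := by
    apply banach_steinhaus
    intro u
    obtain ⟨C, hC⟩ := (isCompact_Icc (a := (0:ℝ)) (b := 1)).exists_bound_of_continuousOn
      ((hTcont u).mono Set.Icc_subset_Ici_self)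
    exact ⟨C, fun i => hC i i.2⟩
  have hM0 : 0 ≤ M := le_trans (norm_nonneg _) (hM ⟨0, by norm_num⟩)
  set r : ℝ := ε / (2 * (M + 1)) with hr
  have hr0 : 0 < r := by positivity
  obtain ⟨t, htfin, htK⟩ := (Metric.totallyBounded_iff.mp hK.totallyBounded) r hr0
  have hev : ∀ᶠ s in 𝓝[Set.Ici (0:ℝ)] 0, (∀ y ∈ t, ‖T s y - y‖ < ε / 2) ∧ s < 1 := by
    refine Filter.Eventually.and ?_ ?_
    · rw [eventually_all_finite htfin]
      intro y hy
      have hcw : Tendsto (fun s => T s y) (𝓝[Set.Ici (0:ℝ)] 0) (𝓝 y) := by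
        have h := (hTcont y) 0 Set.self_mem_Ici
        rw [ContinuousWithinAt, hT0 y] at h
        exact h
      have h2 : Tendsto (fun s => ‖T s y - y‖) (𝓝[Set.Ici (0:ℝ)] 0) (𝓝 0) := by
        simpa using ((hcw.sub_const y).norm)
      exact h2.eventually_lt_const (half_pos hε)
    · exact eventually_nhdsWithin_of_eventually_nhds (eventually_lt_nhds (by norm_num))
  obtain ⟨δ, hδ0, hδ⟩ := Metric.mem_nhdsWithin_iff.mp hev
  refine ⟨δ, hδ0, fun s hs0 hsδ u hu => ?_⟩
  have hsmem : ((∀ y ∈ t, ‖T s y - y‖ < ε / 2) ∧ s < 1) := by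
    apply hδ
    constructor
    · rw [Metric.mem_ball, Real.dist_eq, sub_zero, abs_of_nonneg hs0]; exact hsδ
    · exact hs0
  obtain ⟨y, hyt, hyu⟩ := Set.mem_iUnion₂.mp (htK hu)
  rw [Metric.mem_ball] at hyu
  have hnorm : ‖T s‖ ≤ M := hM ⟨s, hs0, hsmem.2.le⟩
  have h1 : ‖T s u - T s y‖ ≤ M * r := by
    calc ‖T s u - T s y‖ = ‖T s (u - y)‖ := by rw [map_sub]
      _ ≤ ‖T s‖ * ‖u - y‖ := (T s).le_opNorm _
      _ ≤ M * r := by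
          apply mul_le_mul hnorm _ (norm_nonneg _) hM0
          rw [← dist_eq_norm]; exact hyu.le
  have h2 : ‖T s y - y‖ < ε / 2 := hsmem.1 y hyt
  have h3 : ‖y - u‖ ≤ r := by rw [← dist_eq_norm, dist_comm]; exact hyu.le
  have key : T s u - u = (T s u - T s y) + (T s y - y) + (y - u) := by abel
  rw [key]
  calc ‖(T s u - T s y) + (T s y - y) + (y - u)‖
      ≤ ‖T s u - T s y‖ + ‖T s y - y‖ + ‖y - u‖ := norm_add₃_le
    _ ≤ M * r + ε / 2 + r := by
        exact add_le_add (add_le_add h1 h2.le) h3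
    _ = (M + 1) * r + ε / 2 := by ring
    _ = ε / 2 + ε / 2 := by
        rw [hr]; field_simp
    _ = ε := by ring

lemma key_bound
    (T : ℝ → (Lp ℝ 1 μ →L[ℝ] Lp ℝ 1 μ))
    (hT0 : ∀ u, T 0 u = u)
    (hTsemi : ∀ s, 0 ≤ s → ∀ t, 0 ≤ t → ∀ u, T (s + t) u = T s (T t u))
    (hTcont : ∀ u, ContinuousOn (fun t => T t u) (Set.Ici 0))
    (S : ℝ → (Lp ℝ ⊤ μ →ₗ[ℝ] Lp ℝ ⊤ μ))
    (hS : ∀ t, 0 ≤ t → ∀ (F : Lp ℝ ⊤ μ) (u : Lp ℝ 1 μ),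
      ∫ x, (S t F) x * u x ∂μ = ∫ x, F x * (T t u) x ∂μ)
    (F G : Lp ℝ ⊤ μ)
    (hG : ∀ u v : Lp ℝ 1 μ,
        Tendsto (fun t : ℝ => ‖t⁻¹ • (T t u - u) - v‖) (nhdsWithin 0 (Set.Ioi 0)) (nhds 0) →
        ∫ x, F x * v x ∂μ = ∫ x, G x * u x ∂μ)
    {t : ℝ} (ht : 0 < t) (u : Lp ℝ 1 μ) {ε : ℝ} (hε : 0 ≤ ε)
    (hb : ∀ s, 0 < s → s ≤ t → ‖T s u - u‖ ≤ ε) :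
    |∫ x, (t⁻¹ • (S t F - F) - G) x * u x ∂μ| ≤ ‖G‖ * ε := by
  -- the continuous orbit
  set f : ℝ → Lp ℝ 1 μ := fun s => T (max s 0) u with hf
  have hfc : Continuous f := by
    apply (hTcont u).comp_continuous (continuous_id.max continuous_const)
    intro s; exact Set.mem_Ici.mpr (le_max_right _ _)
  have hfs : ∀ s, 0 ≤ s → f s = T s u := fun s hs => by
    simp only [hf, max_eq_left hs]
  -- the primitive
  set Φ : ℝ → Lp ℝ 1 μ := fun r => ∫ s in (0:ℝ)..r, f s with hΦ
  have hder : ∀ b : ℝ, HasDerivAt Φ (f b) b := fun b =>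
    (hfc.integral_hasStrictDerivAt 0 b).hasDerivAt
  have hΦ0 : Φ 0 = 0 := intervalIntegral.integral_same
  set v : Lp ℝ 1 μ := Φ t with hv
  have e6 : v - t • u = ∫ s in (0:ℝ)..t, (f s - u) := by
    rw [intervalIntegral.integral_sub (hfc.intervalIntegrable 0 t)
      (intervalIntegrable_const), intervalIntegral.integral_const, sub_zero]
  -- v is in the domain of the generator with L v = T t u - u
  have hTv : ∀ h : ℝ, 0 < h → T h v - v = (Φ (t + h) - Φ t) - (Φ (0 + h) - Φ 0) := by
    intro h hh
    have e1 : T h v = ∫ s in (0:ℝ)..t, T h (f s) :=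
      ((T h).intervalIntegral_comp_comm (hfc.intervalIntegrable 0 t)).symm
    have e2 : ∫ s in (0:ℝ)..t, T h (f s) = ∫ s in (0:ℝ)..t, f (h + s) := by
      refine intervalIntegral.integral_congr (fun s hs => ?_)
      rw [Set.uIcc_of_le ht.le] at hs
      rw [hfs s hs.1, hfs (h + s) (by linarith [hs.1]), hTsemi h hh.le s hs.1 u]
    have e3 : ∫ s in (0:ℝ)..t, f (h + s) = ∫ s in (h + 0)..(h + t), f s :=
      intervalIntegral.integral_comp_add_left f h
    simp only [add_zero] at e3
    have e4 : (Φ h + ∫ s in h..(h + t), f s) = Φ (h + t) :=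
      intervalIntegral.integral_add_adjacent_intervals
        (hfc.intervalIntegrable 0 h) (hfc.intervalIntegrable h (h + t))
    have e5 : T h v = Φ (h + t) - Φ h := by
      rw [e1, e2, e3]; exact eq_sub_of_add_eq' e4
    rw [e5, hΦ0, sub_zero, zero_add, add_comm h t, hv]; abel
  clear_value v Φ
  have hconv : Tendsto (fun h : ℝ => ‖h⁻¹ • (T h v - v) - (T t u - u)‖)
      (nhdsWithin 0 (Set.Ioi 0)) (nhds 0) := by
    have h1 := (hder t).tendsto_slope_zero_right
    have h2 := (hder 0).tendsto_slope_zero_right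
    have h3 : Tendsto (fun h : ℝ => (h⁻¹ • (Φ (t + h) - Φ t)) - (h⁻¹ • (Φ (0 + h) - Φ 0)))
        (nhdsWithin 0 (Set.Ioi 0)) (nhds (f t - f 0)) := h1.sub h2
    have hft : f t - f 0 = T t u - u := by
      rw [hfs t ht.le, hfs 0 le_rfl, hT0 u]
    rw [hft] at h3
    have h4 : Tendsto (fun h : ℝ => ((h⁻¹ • (Φ (t + h) - Φ t)) - (h⁻¹ • (Φ (0 + h) - Φ 0)))
        - (T t u - u)) (nhdsWithin 0 (Set.Ioi 0)) (nhds 0) := by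
      have := h3.sub_const (T t u - u)
      rwa [sub_self] at this
    have h5 := h4.norm
    rw [norm_zero] at h5
    refine h5.congr' ?_
    filter_upwards [self_mem_nhdsWithin] with h hh
    rw [Set.mem_Ioi] at hh
    rw [hTv h hh]
    congr 1
    module
  have hFv : ∫ x, F x * (T t u - u) x ∂μ = ∫ x, G x * v x ∂μ := hG v (T t u - u) hconv
  -- compute the integral
  have hexp : ∫ x, (t⁻¹ • (S t F - F) - G) x * u x ∂μ
      = t⁻¹ * ∫ x, G x * (v - t • u) x ∂μ := by
    rw [pair_sub_left, pair_smul_left, pair_sub_left, hS t ht.le F u,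
      pair_sub_right, pair_smul_right]
    rw [← pair_sub_right F (T t u) u, hFv]
    field_simp
  rw [hexp]
  have hnv : ‖v - t • u‖ ≤ ε * t := by
    rw [e6]
    have := intervalIntegral.norm_integral_le_of_norm_le_const
      (a := 0) (b := t) (C := ε) (f := fun s => f s - u) ?_
    · calc ‖∫ s in (0:ℝ)..t, (f s - u)‖ ≤ ε * |t - 0| := this
        _ = ε * t := by rw [sub_zero, abs_of_pos ht]
    · intro s hs
      rw [Set.uIoc_of_le ht.le] at hs
      show ‖f s - u‖ ≤ ε
      rw [hfs s hs.1.le]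
      exact hb s hs.1 hs.2
  calc |t⁻¹ * ∫ x, G x * (v - t • u) x ∂μ|
      = t⁻¹ * |∫ x, G x * (v - t • u) x ∂μ| := by
        rw [abs_mul, abs_of_pos (inv_pos.mpr ht)]
    _ ≤ t⁻¹ * (‖G‖ * (ε * t)) := by
        apply mul_le_mul_of_nonneg_left _ (inv_pos.mpr ht).le
        exact (abs_pair_le G _).trans (mul_le_mul_of_nonneg_left hnv (norm_nonneg G))
    _ = ‖G‖ * ε := by field_simp

end Aux
/-- Let `(T_t)_{t≥0}` be a strongly continuous semigroup on `L^1(E,μ)`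
(`E` Polish, `μ` σ-finite Borel) with generator `L`, and let `(S_t) = (T_t^*)` be the
adjoint family on `L^∞(E,μ)`.  For `F ∈ L^∞` the following are equivalent:
(i) there is `G ∈ L^∞` with `∫ F (L u) dμ = ∫ G u dμ` for all `u ∈ D(L)`;
(ii) `(S_t F − F)/t` converges in the topology `C(L^∞,L^1)` as `t → 0⁺`;
and in that case the limit in (ii) equals the `G` of (i).  (Condition (i) for a given `G`
is expressed as: for all `u, v` with `(T_t u − u)/t → v` in `L^1`-norm,
`∫ F v dμ = ∫ G u dμ`; condition (ii) for a given `G` as: for every norm-compact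
`K ⊆ L^1`, `p_K((S_t F − F)/t − G) → 0` as `t → 0⁺`.) -/
theorem adjoint_generator_eq_adjoint_of_generator
    {E : Type*} [TopologicalSpace E] [PolishSpace E] [MeasurableSpace E] [BorelSpace E]
    (μ : Measure E) [SigmaFinite μ]
    (T : ℝ → (Lp ℝ 1 μ →L[ℝ] Lp ℝ 1 μ))
    (hT0 : ∀ u, T 0 u = u)
    (hTsemi : ∀ s, 0 ≤ s → ∀ t, 0 ≤ t → ∀ u, T (s + t) u = T s (T t u))
    (hTcont : ∀ u, ContinuousOn (fun t => T t u) (Set.Ici 0))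
    (S : ℝ → (Lp ℝ ⊤ μ →ₗ[ℝ] Lp ℝ ⊤ μ))
    (hS : ∀ t, 0 ≤ t → ∀ (F : Lp ℝ ⊤ μ) (u : Lp ℝ 1 μ),
      ∫ x, (S t F) x * u x ∂μ = ∫ x, F x * (T t u) x ∂μ)
    (F : Lp ℝ ⊤ μ) :
    -- (i) ⇔ (ii)
    ((∃ G : Lp ℝ ⊤ μ, ∀ u v : Lp ℝ 1 μ,
        Tendsto (fun t : ℝ => ‖t⁻¹ • (T t u - u) - v‖) (nhdsWithin 0 (Set.Ioi 0)) (nhds 0) →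
        ∫ x, F x * v x ∂μ = ∫ x, G x * u x ∂μ) ↔
      (∃ G : Lp ℝ ⊤ μ, ∀ K : Set (Lp ℝ 1 μ), IsCompact K →
        Tendsto (fun t : ℝ => pK μ K (t⁻¹ • (S t F - F) - G))
          (nhdsWithin 0 (Set.Ioi 0)) (nhds 0))) ∧
    -- and in that case the limit in (ii) equals the function `G` of (i)
    (∀ G : Lp ℝ ⊤ μ,
      (∀ u v : Lp ℝ 1 μ,
        Tendsto (fun t : ℝ => ‖t⁻¹ • (T t u - u) - v‖) (nhdsWithin 0 (Set.Ioi 0)) (nhds 0) →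
        ∫ x, F x * v x ∂μ = ∫ x, G x * u x ∂μ) →
      (∀ K : Set (Lp ℝ 1 μ), IsCompact K →
        Tendsto (fun t : ℝ => pK μ K (t⁻¹ • (S t F - F) - G))
          (nhdsWithin 0 (Set.Ioi 0)) (nhds 0))) := by
  have main : ∀ G : Lp ℝ ⊤ μ,
      (∀ u v : Lp ℝ 1 μ,
        Tendsto (fun t : ℝ => ‖t⁻¹ • (T t u - u) - v‖) (nhdsWithin 0 (Set.Ioi 0)) (nhds 0) →
        ∫ x, F x * v x ∂μ = ∫ x, G x * u x ∂μ) →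
      (∀ K : Set (Lp ℝ 1 μ), IsCompact K →
        Tendsto (fun t : ℝ => pK μ K (t⁻¹ • (S t F - F) - G))
          (nhdsWithin 0 (Set.Ioi 0)) (nhds 0)) := by
    intro G hG K hK
    rw [Metric.tendsto_nhds]
    intro ε' hε'
    have hεpos : 0 < ε' / (2 * (‖G‖ + 1)) := by positivity
    obtain ⟨δ, hδ0, hδ⟩ := equicontinuity T hT0 hTcont hK hεpos
    filter_upwards [Ioo_mem_nhdsGT hδ0] with t htm
    obtain ⟨ht0, htδ⟩ := htm
    have hb : pK μ K (t⁻¹ • (S t F - F) - G) ≤ ‖G‖ * (ε' / (2 * (‖G‖ + 1))) := by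
      refine pK_le (by positivity) (fun g hg => ?_)
      exact key_bound T hT0 hTsemi hTcont S hS F G hG ht0 g hεpos.le
        (fun s hs0 hst => hδ s hs0.le (lt_of_le_of_lt hst htδ) g hg)
    rw [Real.dist_eq, sub_zero, abs_of_nonneg (pK_nonneg _ _)]
    refine lt_of_le_of_lt hb ?_
    rw [mul_div_assoc', div_lt_iff₀ (by positivity)]
    nlinarith [norm_nonneg G, hε']
  have easy : ∀ G : Lp ℝ ⊤ μ,
      (∀ K : Set (Lp ℝ 1 μ), IsCompact K →
        Tendsto (fun t : ℝ => pK μ K (t⁻¹ • (S t F - F) - G))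
          (nhdsWithin 0 (Set.Ioi 0)) (nhds 0)) →
      (∀ u v : Lp ℝ 1 μ,
        Tendsto (fun t : ℝ => ‖t⁻¹ • (T t u - u) - v‖) (nhdsWithin 0 (Set.Ioi 0)) (nhds 0) →
        ∫ x, F x * v x ∂μ = ∫ x, G x * u x ∂μ) := by
    intro G hG2 u v htend
    have h1 : Tendsto (fun t : ℝ => ∫ x, F x * (t⁻¹ • (T t u - u)) x ∂μ)
        (nhdsWithin 0 (Set.Ioi 0)) (nhds (∫ x, F x * v x ∂μ)) := by
      rw [tendsto_iff_dist_tendsto_zero]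
      refine squeeze_zero (fun t => dist_nonneg)
        (g := fun t : ℝ => ‖F‖ * ‖t⁻¹ • (T t u - u) - v‖) (fun t => ?_) ?_
      · rw [Real.dist_eq, ← pair_sub_right F (t⁻¹ • (T t u - u)) v]
        exact abs_pair_le F _
      · have h := htend.const_mul ‖F‖
        simpa using h
    have h2 : Tendsto (fun t : ℝ => ∫ x, F x * (t⁻¹ • (T t u - u)) x ∂μ)
        (nhdsWithin 0 (Set.Ioi 0)) (nhds (∫ x, G x * u x ∂μ)) := by
      rw [tendsto_iff_dist_tendsto_zero]
      refine (hG2 {u} isCompact_singleton).congr' ?_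
      filter_upwards [self_mem_nhdsWithin] with t ht
      rw [Set.mem_Ioi] at ht
      rw [pK_singleton, Real.dist_eq]
      congr 1
      rw [pair_sub_left, pair_smul_left, pair_sub_left, hS t ht.le F u,
        pair_smul_right, pair_sub_right]
    exact tendsto_nhds_unique h1 h2
  refine ⟨⟨?_, ?_⟩, main⟩
  · rintro ⟨G, hG⟩; exact ⟨G, main G hG⟩
  · rintro ⟨G, hG⟩; exact ⟨G, easy G hG⟩
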